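/- Let n ∈ ℝ³ be a unit vector. For every three-times continuously differentiable symmetric matrix field τ : ℝ³ → 𝕊, one has pointwise on ℝ³: (n·(inc τ))×n = ∇_F^⊥ · tr₂(τ), as an identity of vector fields. -/

import Mathlib

open Matrix

noncomputable section

abbrev V3 : Type := Fin 3 → ℝ
abbrev M3 : Type := Matrix (Fin 3) (Fin 3) ℝ

/-- The Levi-Civita symbol `ε i j k` on `Fin 3`. -/
def eps (i j k : Fin 3) : ℝ :=
  ((((j : ℤ) - (i : ℤ)) * ((k : ℤ) - (j : ℤ)) * ((k : ℤ) - (i : ℤ)) : ℤ) : ℝ) / 2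

/-- Partial derivative `∂ᵢ f`. -/
def pd (i : Fin 3) (f : V3 → ℝ) : V3 → ℝ :=
  fun x => fderiv ℝ f x (Pi.single i 1)

/-- Cross product of vectors in `ℝ³`. -/
def vcross (a b : V3) : V3 := fun i => ∑ k, ∑ l, eps i k l * a k * b l

/-- Symmetric part of a matrix, `sym B = (B + Bᵀ)/2`. -/
def symMat (B : M3) : M3 := (2:ℝ)⁻¹ • (B + Bᵀ)

/-- `(∇v)_{ij} = ∂ᵢ v_j`. -/
def gradv (v : V3 → V3) : V3 → M3 :=
  fun x => Matrix.of fun i j => pd i (fun y => v y j) x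

/-- Symmetric gradient (deformation) `def v = (∇v + (∇v)ᵀ)/2`. -/
def defv (v : V3 → V3) : V3 → M3 := fun x => symMat (gradv v x)

/-- Column-wise curl `(∇×A)_{ij} = Σ_{s,t} ε_{ist} ∂_s A_{tj}`. -/
def colCurl (A : V3 → M3) : V3 → M3 :=
  fun x => Matrix.of fun i j => ∑ s, ∑ t, eps i s t * pd s (fun y => A y t j) x

/-- Row-wise curl `(A×∇)_{ij} = Σ_{k,l} ε_{jkl} ∂_l A_{ik}`. -/
def rowCurl (A : V3 → M3) : V3 → M3 :=
  fun x => Matrix.of fun i j => ∑ k, ∑ l, eps j k l * pd l (fun y => A y i k) x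

/-- Incompatibility operator `inc A = ∇×(A×∇)`. -/
def incOp (A : V3 → M3) : V3 → M3 := colCurl (rowCurl A)

/-- Row-wise divergence `(div A)_i = Σ_j ∂_j A_{ij}`. -/
def divRow (A : V3 → M3) : V3 → V3 :=
  fun x i => ∑ j, pd j (fun y => A y i j) x

/-- Curl of a vector field. -/
def curlVec (w : V3 → V3) : V3 → V3 :=
  fun x i => ∑ s, ∑ t, eps i s t * pd s (fun y => w y t) x

/-- `(b×A)_{ij} = Σ_{k,l} ε_{ikl} b_k A_{lj}`. -/
def bCrossA (b : V3) (A : M3) : M3 :=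
  Matrix.of fun i j => ∑ k, ∑ l, eps i k l * b k * A l j

/-- `(A×b)_{ij} = Σ_{k,l} ε_{jkl} A_{ik} b_l`. -/
def aCrossB (A : M3) (b : V3) : M3 :=
  Matrix.of fun i j => ∑ k, ∑ l, eps j k l * A i k * b l

/-- `f : ℝ³ → ℝ` is a polynomial map of total degree at most `m` (`m : ℤ`, so
`m < 0` forces `f = 0` since the zero polynomial has empty support). -/
def PolyDeg (m : ℤ) (f : V3 → ℝ) : Prop :=
  ∃ p : MvPolynomial (Fin 3) ℝ,
    (∀ d ∈ p.support, ((∑ i, d i : ℕ) : ℤ) ≤ m) ∧ f = fun x => MvPolynomial.eval x p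

/-- `P_m(ℝ³;ℝ³)`. -/
def PolyVec (m : ℤ) (v : V3 → V3) : Prop := ∀ i, PolyDeg m fun x => v x i

/-- `P_m(ℝ³;𝕄)`. -/
def PolyMat (m : ℤ) (A : V3 → M3) : Prop := ∀ i j, PolyDeg m fun x => A x i j

/-- `P_m(ℝ³;𝕊)`: polynomial symmetric-matrix-valued maps of degree at most `m`. -/
def PolySym (m : ℤ) (A : V3 → M3) : Prop := PolyMat m A ∧ ∀ x, (A x)ᵀ = A x

/-- The tangential projection matrix `Π_F = I - n nᵀ`. -/
def PF (n : V3) : M3 := 1 - Matrix.vecMulVec n n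

/-- Tangential derivative `(∇_F)_i f = Σ_k (Π_F)_{ik} ∂_k f`. -/
def dF (n : V3) (i : Fin 3) (f : V3 → ℝ) : V3 → ℝ :=
  fun x => ∑ k, PF n i k * pd k f x

/-- `(∇_F^⊥)_i f = Σ_{k,l} ε_{ikl} n_k ∂_l f`. -/
def dFperp (n : V3) (i : Fin 3) (f : V3 → ℝ) : V3 → ℝ :=
  fun x => ∑ k, ∑ l, eps i k l * n k * pd l f x

/-- `(∇_F w)_{ij} = (∇_F)_i w_j`. -/
def gradF (n : V3) (w : V3 → V3) : V3 → M3 :=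
  fun x => Matrix.of fun i j => dF n i (fun y => w y j) x

/-- First trace for the `inc` operator: `tr₁(τ) = n×τ×n`. -/
def tr1 (n : V3) (τ : V3 → M3) : V3 → M3 :=
  fun x => bCrossA n (aCrossB (τ x) n)

/-- Second trace for the `inc` operator:
`tr₂(τ) = sym( n×(∇×τ)·Π_F + ∇_F(n·τ·Π_F) )`. -/
def tr2 (n : V3) (τ : V3 → M3) : V3 → M3 :=
  fun x => symMat (bCrossA n (colCurl τ x) * PF n
    + gradF n (fun y => Matrix.vecMul (Matrix.vecMul n (τ y)) (PF n)) x)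


section helperlemmas

@[simp] lemma eps_000 : eps 0 0 0 = 0 := by norm_num [eps]
@[simp] lemma eps_001 : eps 0 0 1 = 0 := by norm_num [eps]
@[simp] lemma eps_002 : eps 0 0 2 = 0 := by norm_num [eps]
@[simp] lemma eps_010 : eps 0 1 0 = 0 := by norm_num [eps]
@[simp] lemma eps_011 : eps 0 1 1 = 0 := by norm_num [eps]
@[simp] lemma eps_012 : eps 0 1 2 = 1 := by norm_num [eps]
@[simp] lemma eps_020 : eps 0 2 0 = 0 := by norm_num [eps]
@[simp] lemma eps_021 : eps 0 2 1 = -1 := by norm_num [eps]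
@[simp] lemma eps_022 : eps 0 2 2 = 0 := by norm_num [eps]
@[simp] lemma eps_100 : eps 1 0 0 = 0 := by norm_num [eps]
@[simp] lemma eps_101 : eps 1 0 1 = 0 := by norm_num [eps]
@[simp] lemma eps_102 : eps 1 0 2 = -1 := by norm_num [eps]
@[simp] lemma eps_110 : eps 1 1 0 = 0 := by norm_num [eps]
@[simp] lemma eps_111 : eps 1 1 1 = 0 := by norm_num [eps]
@[simp] lemma eps_112 : eps 1 1 2 = 0 := by norm_num [eps]
@[simp] lemma eps_120 : eps 1 2 0 = 1 := by norm_num [eps]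
@[simp] lemma eps_121 : eps 1 2 1 = 0 := by norm_num [eps]
@[simp] lemma eps_122 : eps 1 2 2 = 0 := by norm_num [eps]
@[simp] lemma eps_200 : eps 2 0 0 = 0 := by norm_num [eps]
@[simp] lemma eps_201 : eps 2 0 1 = 1 := by norm_num [eps]
@[simp] lemma eps_202 : eps 2 0 2 = 0 := by norm_num [eps]
@[simp] lemma eps_210 : eps 2 1 0 = -1 := by norm_num [eps]
@[simp] lemma eps_211 : eps 2 1 1 = 0 := by norm_num [eps]
@[simp] lemma eps_212 : eps 2 1 2 = 0 := by norm_num [eps]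
@[simp] lemma eps_220 : eps 2 2 0 = 0 := by norm_num [eps]
@[simp] lemma eps_221 : eps 2 2 1 = 0 := by norm_num [eps]
@[simp] lemma eps_222 : eps 2 2 2 = 0 := by norm_num [eps]


lemma contDiff_pd {m : ℕ} {f : V3 → ℝ} (hf : ContDiff ℝ (m + 1 : ℕ) f) (b : Fin 3) :
    ContDiff ℝ m (pd b f) := by
  have h : ContDiff ℝ m (fderiv ℝ f) := hf.fderiv_right (by exact_mod_cast le_refl (m+1 : ℕ∞))
  exact (ContinuousLinearMap.apply ℝ ℝ (Pi.single b 1)).contDiff.comp h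

lemma pd_comm {f : V3 → ℝ} (hf : ContDiff ℝ 2 f) (a b : Fin 3) (x : V3) :
    pd a (pd b f) x = pd b (pd a f) x := by
  have hsymm : IsSymmSndFDerivAt ℝ f x :=
    hf.contDiffAt.isSymmSndFDerivAt (by simp [minSmoothness_of_isRCLikeNormedField])
  have hdf : DifferentiableAt ℝ (fderiv ℝ f) x :=
    (hf.fderiv_right (m := 1) (by norm_num)).differentiable (by norm_num) |>.differentiableAt
  have key : ∀ v w : V3, fderiv ℝ (fun y => fderiv ℝ f y v) x w
      = fderiv ℝ (fderiv ℝ f) x w v := by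
    intro v w
    rw [fderiv_clm_apply hdf (differentiableAt_const v)]
    simp
  show fderiv ℝ (fun y => fderiv ℝ f y (Pi.single b 1)) x (Pi.single a 1)
      = fderiv ℝ (fun y => fderiv ℝ f y (Pi.single a 1)) x (Pi.single b 1)
  rw [key, key, hsymm]

section lin
variable {f g : V3 → ℝ} {i : Fin 3} {x : V3}

lemma pd_add (hf : Differentiable ℝ f) (hg : Differentiable ℝ g) :
    pd i (fun y => f y + g y) x = pd i f x + pd i g x := by
  simp [pd, fderiv_fun_add (hf x) (hg x)]

lemma pd_sub (hf : Differentiable ℝ f) (hg : Differentiable ℝ g) :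
    pd i (fun y => f y - g y) x = pd i f x - pd i g x := by
  simp [pd, fderiv_fun_sub (hf x) (hg x)]

lemma pd_neg : pd i (fun y => -f y) x = -pd i f x := by
  simp [pd, fderiv_neg]

lemma pd_cmul (c : ℝ) (hf : Differentiable ℝ f) :
    pd i (fun y => c * f y) x = c * pd i f x := by
  simp [pd, fderiv_const_mul (hf x) c]

lemma pd_mulc (c : ℝ) (hf : Differentiable ℝ f) :
    pd i (fun y => f y * c) x = pd i f x * c := by
  have : (fun y => f y * c) = fun y => c * f y := by funext y; ring
  rw [this, pd_cmul c hf, mul_comm]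

lemma pd_const (c : ℝ) : pd i (fun _ => c) x = 0 := by
  simp [pd]

lemma pd_sum {α : Type*} (s : Finset α) (f : α → V3 → ℝ)
    (hf : ∀ a, Differentiable ℝ (f a)) :
    pd i (fun y => ∑ a ∈ s, f a y) x = ∑ a ∈ s, pd i (f a) x := by
  simp only [pd, fderiv_fun_sum (fun a _ => (hf a) x)]
  simp
end lin

end helperlemmas

attribute [irreducible] pd

set_option maxHeartbeats 4000000 in
/-- `(n·(inc τ))×n = ∇_F^⊥ · tr₂(τ)` as vector fields. -/
theorem stmt_16 (n : V3) (hn : ∑ i, n i * n i = 1)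
    (τ : V3 → M3) (hτsym : ∀ x, (τ x)ᵀ = τ x)
    (hτ : ∀ i j, ContDiff ℝ 3 fun x => τ x i j) :
    ∀ x, vcross (Matrix.vecMul n (incOp τ x)) n
      = fun j => ∑ i, dFperp n i (fun y => tr2 n τ y i j) x := by
  have hd0 : ∀ i j, Differentiable ℝ fun y => τ y i j :=
    fun i j => (hτ i j).differentiable (by norm_num)
  have hc1 : ∀ (s : Fin 3) (i j : Fin 3), ContDiff ℝ 2 (pd s fun y => τ y i j) := by
    intro s i j
    have h3 : ContDiff ℝ ((2 : ℕ) + 1 : ℕ) fun x => τ x i j := by exact_mod_cast hτ i j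
    exact_mod_cast contDiff_pd h3 s
  have hd1 : ∀ (s : Fin 3) (i j : Fin 3), Differentiable ℝ (pd s fun y => τ y i j) :=
    fun s i j => (hc1 s i j).differentiable (by norm_num)
  have hs10 : (fun y => τ y 1 0) = fun y => τ y 0 1 := by
    funext y; exact congrFun (congrFun (hτsym y) 0) 1
  have hs20 : (fun y => τ y 2 0) = fun y => τ y 0 2 := by
    funext y; exact congrFun (congrFun (hτsym y) 0) 2
  have hs21 : (fun y => τ y 2 1) = fun y => τ y 1 2 := by
    funext y; exact congrFun (congrFun (hτsym y) 1) 2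
  intro x
  have hc2 : ∀ (i j : Fin 3), ContDiff ℝ 2 fun y => τ y i j :=
    fun i j => (hτ i j).of_le (by norm_num)
  have hc10 : ∀ i j : Fin 3, pd 1 (pd 0 fun y => τ y i j) x = pd 0 (pd 1 fun y => τ y i j) x :=
    fun i j => pd_comm (hc2 i j) 1 0 x
  have hc20 : ∀ i j : Fin 3, pd 2 (pd 0 fun y => τ y i j) x = pd 0 (pd 2 fun y => τ y i j) x :=
    fun i j => pd_comm (hc2 i j) 2 0 x
  have hc21 : ∀ i j : Fin 3, pd 2 (pd 1 fun y => τ y i j) x = pd 1 (pd 2 fun y => τ y i j) x :=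
    fun i j => pd_comm (hc2 i j) 2 1 x
  funext j
  simp only [vcross, Matrix.vecMul, dotProduct, incOp, colCurl, rowCurl, dFperp, tr2,
    symMat, bCrossA, gradF, dF, Matrix.of_apply, Matrix.transpose_apply, Matrix.add_apply,
    Matrix.smul_apply, smul_eq_mul, Matrix.mul_apply]
  simp (disch := fun_prop) only [pd_sum, pd_add, pd_sub, pd_neg, pd_cmul, pd_mulc, pd_const]
  fin_cases j <;>
  · simp only [Fin.zero_eta, Fin.mk_one, Fin.reduceFinMk, Fin.isValue, PF,
      Matrix.sub_apply, Matrix.one_apply, Matrix.vecMulVec_apply, Fin.reduceEq, reduceIte,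
      Fin.sum_univ_three, eps_000, eps_001, eps_002, eps_010, eps_011,
      eps_012, eps_020, eps_021, eps_022, eps_100, eps_101, eps_102, eps_110, eps_111, eps_112,
      eps_120, eps_121, eps_122, eps_200, eps_201, eps_202, eps_210, eps_211, eps_212, eps_220,
      eps_221, eps_222, zero_mul, mul_zero, one_mul, mul_one, neg_mul, mul_neg, add_zero,
      zero_add, neg_neg, neg_zero]
    simp only [hs10, hs20, hs21, hc10, hc20, hc21]
    try generalize pd 0 (pd 0 fun y => τ y 0 0) x = d0000
    try generalize pd 0 (pd 0 fun y => τ y 0 1) x = d0001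
    try generalize pd 0 (pd 0 fun y => τ y 0 2) x = d0002
    try generalize pd 0 (pd 0 fun y => τ y 1 1) x = d0011
    try generalize pd 0 (pd 0 fun y => τ y 1 2) x = d0012
    try generalize pd 0 (pd 0 fun y => τ y 2 2) x = d0022
    try generalize pd 0 (pd 1 fun y => τ y 0 0) x = d0100
    try generalize pd 0 (pd 1 fun y => τ y 0 1) x = d0101
    try generalize pd 0 (pd 1 fun y => τ y 0 2) x = d0102
    try generalize pd 0 (pd 1 fun y => τ y 1 1) x = d0111
    try generalize pd 0 (pd 1 fun y => τ y 1 2) x = d0112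
    try generalize pd 0 (pd 1 fun y => τ y 2 2) x = d0122
    try generalize pd 0 (pd 2 fun y => τ y 0 0) x = d0200
    try generalize pd 0 (pd 2 fun y => τ y 0 1) x = d0201
    try generalize pd 0 (pd 2 fun y => τ y 0 2) x = d0202
    try generalize pd 0 (pd 2 fun y => τ y 1 1) x = d0211
    try generalize pd 0 (pd 2 fun y => τ y 1 2) x = d0212
    try generalize pd 0 (pd 2 fun y => τ y 2 2) x = d0222
    try generalize pd 1 (pd 1 fun y => τ y 0 0) x = d1100
    try generalize pd 1 (pd 1 fun y => τ y 0 1) x = d1101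
    try generalize pd 1 (pd 1 fun y => τ y 0 2) x = d1102
    try generalize pd 1 (pd 1 fun y => τ y 1 1) x = d1111
    try generalize pd 1 (pd 1 fun y => τ y 1 2) x = d1112
    try generalize pd 1 (pd 1 fun y => τ y 2 2) x = d1122
    try generalize pd 1 (pd 2 fun y => τ y 0 0) x = d1200
    try generalize pd 1 (pd 2 fun y => τ y 0 1) x = d1201
    try generalize pd 1 (pd 2 fun y => τ y 0 2) x = d1202
    try generalize pd 1 (pd 2 fun y => τ y 1 1) x = d1211
    try generalize pd 1 (pd 2 fun y => τ y 1 2) x = d1212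
    try generalize pd 1 (pd 2 fun y => τ y 2 2) x = d1222
    try generalize pd 2 (pd 2 fun y => τ y 0 0) x = d2200
    try generalize pd 2 (pd 2 fun y => τ y 0 1) x = d2201
    try generalize pd 2 (pd 2 fun y => τ y 0 2) x = d2202
    try generalize pd 2 (pd 2 fun y => τ y 1 1) x = d2211
    try generalize pd 2 (pd 2 fun y => τ y 1 2) x = d2212
    try generalize pd 2 (pd 2 fun y => τ y 2 2) x = d2222
    ring
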